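/- Let (A, Φ, V, H) be a C*-Eberlein algebra. Then A* with the product ⟨μ ⋆ λ, a⟩ = ⟨Φ(a), μ ⊗ λ⟩ is a dual Banach algebra: multiplication is separately weak*-continuous. Moreover, for a = (id ⊗ ω)(V) ∈ A and μ ∈ A*, the module actions satisfy a·μ = (id ⊗ ωV_μ)(V) and μ·a = (id ⊗ V_μω)(V), where V_μ = (μ ⊗ id)(V). -/

import Mathlib

open scoped InnerProductSpace
open Filter Topology

lemma eberlein_aux
    {H A : Type*} [NormedAddCommGroup H] [InnerProductSpace ℂ H]
    [NormedAddCommGroup A] [NormedSpace ℂ A] [CompleteSpace A]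
    (coef : H → H → A)
    (hdense : Dense (Submodule.span ℂ {a : A | ∃ ξ η : H, a = coef ξ η} : Set A))
    (m : (A →L[ℂ] ℂ) → (A →L[ℂ] ℂ)) (g : H → H → A)
    (hm : ∀ (lam : A →L[ℂ] ℂ) (ξ η : H), m lam (coef ξ η) = lam (g ξ η)) (a : A) :
    ∃ b : A, ∀ lam : A →L[ℂ] ℂ, m lam a = lam b := by
  -- extensionality on the dense span
  have hext : ∀ (φ ψ : A →L[ℂ] ℂ), (∀ ξ η : H, φ (coef ξ η) = ψ (coef ξ η)) → φ = ψ := by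
    intro φ ψ h
    refine ContinuousLinearMap.ext_on hdense ?_
    rintro x ⟨ξ, η, rfl⟩
    exact h ξ η
  -- m is linear
  set Lm : (A →L[ℂ] ℂ) →ₗ[ℂ] (A →L[ℂ] ℂ) :=
    { toFun := m
      map_add' := by
        intro x y
        apply hext
        intro ξ η
        simp [hm]
      map_smul' := by
        intro c x
        apply hext
        intro ξ η
        simp [hm] }
  have hLm : ∀ lam, Lm lam = m lam := fun _ => rfl
  -- closed graph theorem
  have hcont : Continuous Lm := by
    apply Lm.continuous_of_seq_closed_graph
    intro u x y hu hy
    apply hext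
    intro ξ η
    have h1 : Tendsto (fun n => (Lm ∘ u) n (coef ξ η)) atTop (𝓝 (y (coef ξ η))) := by
      have := (ContinuousLinearMap.apply ℂ ℂ (coef ξ η)).continuous.tendsto y
      exact this.comp hy
    have h2 : Tendsto (fun n => (Lm ∘ u) n (coef ξ η)) atTop (𝓝 (x (g ξ η))) := by
      have := (ContinuousLinearMap.apply ℂ ℂ (g ξ η)).continuous.tendsto x
      have h3 := this.comp hu
      simp only [Function.comp] at h3 ⊢
      simpa only [Function.comp_def, ContinuousLinearMap.apply_apply, hLm, hm] using h3
    have := tendsto_nhds_unique h1 h2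
    rw [hLm, hm, this]
  let LmC : (A →L[ℂ] ℂ) →L[ℂ] (A →L[ℂ] ℂ) := ⟨Lm, hcont⟩
  set K : ℝ := ‖LmC‖ with hK
  have hbound : ∀ (lam : A →L[ℂ] ℂ) (x : A), ‖m lam x‖ ≤ K * ‖lam‖ * ‖x‖ := by
    intro lam x
    calc ‖m lam x‖ ≤ ‖LmC lam‖ * ‖x‖ := (LmC lam).le_opNorm x
      _ ≤ K * ‖lam‖ * ‖x‖ := by
          gcongr
          exact LmC.le_opNorm lam
  -- property on the span
  have hspan : ∀ x ∈ Submodule.span ℂ {a : A | ∃ ξ η : H, a = coef ξ η},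
      ∃ b : A, ∀ lam : A →L[ℂ] ℂ, m lam x = lam b := by
    intro x hx
    induction hx using Submodule.span_induction with
    | mem x hx =>
        obtain ⟨ξ, η, rfl⟩ := hx
        exact ⟨g ξ η, fun lam => hm lam ξ η⟩
    | zero => exact ⟨0, fun lam => by simp⟩
    | add x y _ _ hx hy =>
        obtain ⟨b1, hb1⟩ := hx
        obtain ⟨b2, hb2⟩ := hy
        exact ⟨b1 + b2, fun lam => by simp [map_add, hb1 lam, hb2 lam]⟩
    | smul c x _ hx =>
        obtain ⟨b, hb⟩ := hx
        exact ⟨c • b, fun lam => by simp [map_smul, hb lam]⟩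
  -- extend to all of A by density and completeness
  obtain ⟨u, humem, hulim⟩ := mem_closure_iff_seq_limit.mp (hdense a)
  choose b hb using fun n => hspan (u n) (humem n)
  have hdiff : ∀ p q : ℕ, ‖b p - b q‖ ≤ K * ‖u p - u q‖ := by
    intro p q
    refine NormedSpace.norm_le_dual_bound ℂ _ (by positivity) ?_
    intro f
    have : f (b p - b q) = m f (u p - u q) := by
      rw [map_sub, map_sub, hb p f, hb q f]
    rw [this]
    calc ‖m f (u p - u q)‖ ≤ K * ‖f‖ * ‖u p - u q‖ := hbound f _
      _ = K * ‖u p - u q‖ * ‖f‖ := by ring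
  have hcu : CauchySeq u := hulim.cauchySeq
  have hcb : CauchySeq b := by
    rw [Metric.cauchySeq_iff] at hcu ⊢
    intro ε hε
    obtain ⟨N, hN⟩ := hcu (ε / (K + 1)) (by positivity)
    refine ⟨N, fun p hp q hq => ?_⟩
    have h1 := hN p hp q hq
    have h2 := hdiff p q
    rw [dist_eq_norm] at h1 ⊢
    have hK1 : K ≤ K + 1 := by linarith
    calc ‖b p - b q‖ ≤ K * ‖u p - u q‖ := h2
      _ ≤ (K + 1) * ‖u p - u q‖ := by
          have : (0:ℝ) ≤ ‖u p - u q‖ := norm_nonneg _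
          nlinarith
      _ < (K + 1) * (ε / (K + 1)) := by
          have hKpos : (0:ℝ) < K + 1 := by positivity
          exact (mul_lt_mul_iff_right₀ hKpos).mpr h1
      _ = ε := by field_simp; exact div_self (by positivity)
  obtain ⟨L, hL⟩ := cauchySeq_tendsto_of_complete hcb
  refine ⟨L, fun lam => ?_⟩
  have h1 : Tendsto (fun n => lam (b n)) atTop (𝓝 (lam L)) :=
    (lam.continuous.tendsto L).comp hL
  have h2 : Tendsto (fun n => lam (b n)) atTop (𝓝 (m lam a)) := by
    have h3 : Tendsto (fun n => m lam (u n)) atTop (𝓝 (m lam a)) :=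
      ((m lam).continuous.tendsto a).comp hulim
    simpa only [fun n => (hb n lam).symm] using h3
  exact (tendsto_nhds_unique h2 h1)


/-- Let `(A, Φ, V, H)` be a C*-Eberlein algebra, presented via the
slices `coef ξ η = (id ⊗ ω_{ξ,η})(V) ∈ A` (densely spanning), the contractive
homomorphism `μ ↦ V_μ = (μ ⊗ id)(V)`, and the induced associative product
`⟨μ ⋆ λ, coef ξ η⟩ = (V_μ V_λ ξ | η)` on `A*`.  Then `A*` is a dual Banach algebra:
multiplication is separately weak*-continuous, i.e. for every `μ ∈ A*` and `a ∈ A` the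
functionals `λ ↦ ⟨μ ⋆ λ, a⟩` and `λ ↦ ⟨λ ⋆ μ, a⟩` are represented by elements `a·μ` and
`μ·a` of `A`; moreover on the slices the module actions are given by
`(coef ξ η)·μ = (id ⊗ ω_{ξ,η}V_μ)(V) = coef ξ (V_μ* η)` and
`μ·(coef ξ η) = (id ⊗ V_μ ω_{ξ,η})(V) = coef (V_μ ξ) η`. -/
theorem eberlein_dual_is_dual_banach_algebra
    {H : Type*} [NormedAddCommGroup H] [InnerProductSpace ℂ H] [CompleteSpace H]
    {A : Type*} [NonUnitalNormedRing A] [StarRing A] [CStarRing A]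
    [NormedSpace ℂ A] [IsScalarTower ℂ A A] [SMulCommClass ℂ A A] [CompleteSpace A]
    (coef : H → H → A)
    (hdense : Dense (Submodule.span ℂ {a : A | ∃ ξ η : H, a = coef ξ η} : Set A))
    (Vmu : (A →L[ℂ] ℂ) → (H →L[ℂ] H))
    (hVmu : ∀ (μ : A →L[ℂ] ℂ) (ξ η : H), ⟪η, Vmu μ ξ⟫_ℂ = μ (coef ξ η))
    (hVcontr : ∀ μ : A →L[ℂ] ℂ, ‖Vmu μ‖ ≤ ‖μ‖)
    (mul : (A →L[ℂ] ℂ) → (A →L[ℂ] ℂ) → (A →L[ℂ] ℂ))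
    (hmulcoef : ∀ (μ lam : A →L[ℂ] ℂ) (ξ η : H),
      mul μ lam (coef ξ η) = ⟪η, Vmu μ (Vmu lam ξ)⟫_ℂ)
    (hassoc : ∀ μ lam ν : A →L[ℂ] ℂ, mul (mul μ lam) ν = mul μ (mul lam ν))
    (hhom : ∀ μ lam : A →L[ℂ] ℂ, Vmu (mul μ lam) = Vmu μ ∘L Vmu lam) :
    -- A* is a dual Banach algebra: A ⊆ A** is a sub-bimodule
    (∀ (μ : A →L[ℂ] ℂ) (a : A),
      (∃ b : A, ∀ lam : A →L[ℂ] ℂ, mul μ lam a = lam b) ∧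
      (∃ b : A, ∀ lam : A →L[ℂ] ℂ, mul lam μ a = lam b)) ∧
    -- explicit module actions on the slices
    (∀ (μ lam : A →L[ℂ] ℂ) (ξ η : H),
      mul μ lam (coef ξ η) = lam (coef ξ (ContinuousLinearMap.adjoint (Vmu μ) η)) ∧
      mul lam μ (coef ξ η) = lam (coef (Vmu μ ξ) η)) := by
  have key1 : ∀ (μ lam : A →L[ℂ] ℂ) (ξ η : H),
      mul μ lam (coef ξ η) = lam (coef ξ (ContinuousLinearMap.adjoint (Vmu μ) η)) := by
    intro μ lam ξ η
    rw [hmulcoef, ← hVmu lam ξ (ContinuousLinearMap.adjoint (Vmu μ) η),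
      ContinuousLinearMap.adjoint_inner_left]
  have key2 : ∀ (μ lam : A →L[ℂ] ℂ) (ξ η : H),
      mul lam μ (coef ξ η) = lam (coef (Vmu μ ξ) η) := by
    intro μ lam ξ η
    rw [hmulcoef, ← hVmu lam (Vmu μ ξ) η]
  refine ⟨fun μ a => ⟨?_, ?_⟩, fun μ lam ξ η => ⟨key1 μ lam ξ η, key2 μ lam ξ η⟩⟩
  · exact eberlein_aux coef hdense (fun lam => mul μ lam)
      (fun ξ η => coef ξ (ContinuousLinearMap.adjoint (Vmu μ) η)) (fun lam => key1 μ lam) a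
  · exact eberlein_aux coef hdense (fun lam => mul lam μ)
      (fun ξ η => coef (Vmu μ ξ) η) (fun lam => key2 μ lam) a
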